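/- Let a ∈ ℕ with a ≥ 2, let n ∈ ℕ be even with n > 2, let R_n ∈ GL(2,ℝ) be the rotation matrix by angle 2π/n, and let V = V^{a,n} = {(x,y) ∈ ℝ² : |y| ∈ (1,a], |x| ≤ tan(π/n)|y|}. Set 𝒟 = {a^k (R_n)^l : k ∈ ℤ, l = 0, …, n/2 − 1} ⊂ GL(2,ℝ). Then V tiles ℝ² under the action of 𝒟^{-T}: the sets g^{-T}V for g ∈ 𝒟 are pairwise disjoint up to Lebesgue-null sets, and their union equals ℝ² \ {0} up to a Lebesgue-null set; equivalently, ∑_{k∈ℤ} ∑_{l=0}^{n/2−1} 𝟙_{(a^k (R_n)^l)^{-T} V}(ξ) = 1 for almost every ξ ∈ ℝ². -/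

import Mathlib

open Matrix Set MeasureTheory
open scoped ENNReal

noncomputable section

/-- The rotation matrix by angle `2π/n`. -/
def Rmat (n : ℕ) : Matrix (Fin 2) (Fin 2) ℝ :=
  !![Real.cos (2 * Real.pi / n), -Real.sin (2 * Real.pi / n);
     Real.sin (2 * Real.pi / n), Real.cos (2 * Real.pi / n)]

/-- The set `V^{a,n} = {(x,y) ∈ ℝ² : |y| ∈ (1,a], |x| ≤ tan(π/n)|y|}`. -/
def Van (a n : ℕ) : Set (Fin 2 → ℝ) :=
  {v | |v 1| ∈ Set.Ioc 1 (a : ℝ) ∧ |v 0| ≤ Real.tan (Real.pi / n) * |v 1|}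

namespace St16

open Real

lemma abs_cos_add_int_mul_pi (x : ℝ) (j : ℤ) :
    |Real.cos (x + j * Real.pi)| = |Real.cos x| := by
  have hs : Real.sin ((j : ℝ) * Real.pi) = 0 := Real.sin_int_mul_pi j
  have h1 : Real.sin ((j:ℝ)*Real.pi)^2 + Real.cos ((j:ℝ)*Real.pi)^2 = 1 :=
    Real.sin_sq_add_cos_sq _
  have hc : |Real.cos ((j:ℝ) * Real.pi)| = 1 := by
    have h2 : (Real.cos ((j:ℝ)*Real.pi) - 1) * (Real.cos ((j:ℝ)*Real.pi) + 1) = 0 := by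
      nlinarith
    rcases mul_eq_zero.mp h2 with h | h
    · have : Real.cos ((j:ℝ)*Real.pi) = 1 := by linarith
      rw [this]; norm_num
    · have : Real.cos ((j:ℝ)*Real.pi) = -1 := by linarith
      rw [this]; norm_num
  rw [Real.cos_add, hs, mul_zero, sub_zero, abs_mul, hc, mul_one]

lemma cone_iff {t : ℝ} (ht : 0 < t) (ht2 : t < Real.pi/2) (φ : ℝ) :
    |Real.cos φ| ≤ Real.tan t * |Real.sin φ| ↔ |Real.cos φ| ≤ Real.sin t := by
  have hct : 0 < Real.cos t := Real.cos_pos_of_mem_Ioo ⟨by linarith, ht2⟩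
  have hst : 0 < Real.sin t := Real.sin_pos_of_pos_of_lt_pi ht (by linarith [Real.pi_pos])
  have h1 : Real.sin φ ^2 + Real.cos φ ^2 = 1 := Real.sin_sq_add_cos_sq φ
  have h2 : Real.sin t ^2 + Real.cos t ^2 = 1 := Real.sin_sq_add_cos_sq t
  have ha1 : 0 ≤ |Real.cos φ| := abs_nonneg _
  have ha2 : 0 ≤ |Real.sin φ| := abs_nonneg _
  have e1 : |Real.cos φ|^2 = Real.cos φ^2 := sq_abs _
  have e2 : |Real.sin φ|^2 = Real.sin φ^2 := sq_abs _
  rw [Real.tan_eq_sin_div_cos, div_mul_eq_mul_div, le_div_iff₀ hct]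
  constructor
  · intro h
    -- |cos φ| * cos t ≤ sin t * |sin φ|  ⟹  |cos φ| ≤ sin t
    nlinarith [sq_nonneg (|Real.sin φ| - Real.cos t), sq_nonneg (|Real.cos φ| - Real.sin t),
      mul_nonneg ha1 hct.le, mul_nonneg ha2 hst.le]
  · intro h
    have hu : Real.cos t ≤ |Real.sin φ| := by
      nlinarith [sq_nonneg (|Real.sin φ| + Real.cos t)]
    calc |Real.cos φ| * Real.cos t ≤ Real.sin t * Real.cos t := by nlinarith
      _ ≤ Real.sin t * |Real.sin φ| := by nlinarith

lemma abs_cos_lt {s x : ℝ} (hs : 0 < s) (hs2 : s ≤ Real.pi/2)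
    (hx : x ∈ Set.Ioo (Real.pi/2 - s/2) (Real.pi/2 + s/2)) :
    |Real.cos x| < Real.sin (s/2) := by
  have hπ := Real.pi_pos
  obtain ⟨hx1, hx2⟩ := hx
  have h1 : Real.cos x < Real.sin (s/2) := by
    rw [← Real.cos_pi_div_two_sub]
    exact Real.strictAntiOn_cos ⟨by linarith, by linarith⟩ ⟨by linarith, by linarith⟩ hx1
  have h2 : -Real.sin (s/2) < Real.cos x := by
    rw [← Real.cos_add_pi_div_two]
    exact Real.strictAntiOn_cos ⟨by linarith, by linarith⟩ ⟨by linarith, by linarith⟩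
      (by linarith)
  exact abs_lt.mpr ⟨h2, h1⟩

lemma sin_lt_abs_cos {s u : ℝ} (hs : 0 < s) (hs2 : s ≤ Real.pi/2)
    (hu : u ∈ Set.Ioo (Real.pi/2 + s/2) (3*Real.pi/2 - s/2)) :
    Real.sin (s/2) < |Real.cos u| := by
  have hπ := Real.pi_pos
  obtain ⟨hu1, hu2⟩ := hu
  have key : Real.cos u < -Real.sin (s/2) := by
    rw [← Real.cos_add_pi_div_two]
    rcases le_or_gt u Real.pi with h | h
    · exact Real.strictAntiOn_cos ⟨by linarith, by linarith⟩ ⟨by linarith, h⟩ (by linarith)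
    · have e : Real.cos u = Real.cos (2*Real.pi - u) := (Real.cos_two_pi_sub u).symm
      rw [e]
      exact Real.strictAntiOn_cos ⟨by linarith, by linarith⟩ ⟨by linarith, by linarith⟩
        (by linarith)
  calc Real.sin (s/2) < -Real.cos u := by linarith
    _ ≤ |Real.cos u| := neg_le_abs _

lemma radial {a : ℝ} (ha : 2 ≤ a) {t : ℝ} (ht : 0 < t) :
    ∃! k : ℤ, a ^ k * t ∈ Set.Ioc 1 a := by
  have ha1 : (1:ℝ) < a := by linarith
  have ha0 : (0:ℝ) < a := by linarith
  have hane : a ≠ 0 := ne_of_gt ha0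
  have hpos : ∀ i : ℤ, (0:ℝ) < a ^ i := fun i => zpow_pos ha0 i
  obtain ⟨j, hj1, hj2⟩ := exists_mem_Ioc_zpow ht ha1
  have key : ∀ k k' : ℤ, k < k' → a^k * t ∈ Set.Ioc 1 a → a^k' * t ∈ Set.Ioc 1 a → False := by
    intro k k' hlt h1 h2
    have hd : a ≤ a ^ (k' - k) := by
      calc a = a^(1:ℤ) := (zpow_one a).symm
        _ ≤ a^(k'-k) := by
            apply zpow_le_zpow_right₀ ha1.le
            omega
    have he : a^(k') * t = a^(k'-k) * (a^k * t) := by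
      rw [← mul_assoc, ← zpow_add₀ hane]; ring_nf
    have : a < a^(k') * t := by
      rw [he]
      calc a ≤ a^(k'-k) := hd
        _ = a^(k'-k) * 1 := (mul_one _).symm
        _ < a^(k'-k) * (a^k * t) := by
            exact mul_lt_mul_of_pos_left h1.1 (hpos _)
    exact absurd h2.2 (not_le.mpr this)
  have hIoc : a ^ (-j) * t ∈ Set.Ioc 1 a := by
    constructor
    · have h := (mul_lt_mul_iff_right₀ (hpos (-j))).mpr hj1
      rwa [← zpow_add₀ hane, neg_add_cancel, zpow_zero] at h
    · have h := (mul_le_mul_iff_right₀ (hpos (-j))).mpr hj2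
      rw [← zpow_add₀ hane] at h
      have e : -j + (j+1) = 1 := by omega
      rwa [e, zpow_one] at h
  refine ⟨-j, hIoc, ?_⟩
  intro k hk
  rcases lt_trichotomy k (-j) with h | h | h
  · exact absurd (key k (-j) h hk hIoc) (fun f => f)
  · exact h
  · exact absurd (key (-j) k h hIoc hk) (fun f => f)

lemma line_null (β : ℝ) :
    volume {ξ : Fin 2 → ℝ | Real.sin β * ξ 0 - Real.cos β * ξ 1 = 0} = 0 := by
  set f : (Fin 2 → ℝ) →ₗ[ℝ] ℝ :=
    Real.sin β • LinearMap.proj 0 - Real.cos β • LinearMap.proj 1 with hf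
  have hker : {ξ : Fin 2 → ℝ | Real.sin β * ξ 0 - Real.cos β * ξ 1 = 0}
      = (LinearMap.ker f : Set (Fin 2 → ℝ)) := by
    ext ξ
    simp [hf, LinearMap.mem_ker, smul_eq_mul, sub_eq_zero]
  rw [hker]
  apply Measure.addHaar_submodule
  intro htop
  have hmem : ![Real.sin β, -Real.cos β] ∈ LinearMap.ker f := by
    rw [htop]; trivial
  have h1 : Real.sin β * Real.sin β - Real.cos β * (-Real.cos β) = 0 := by
    have := LinearMap.mem_ker.mp hmem
    simpa [hf, smul_eq_mul] using this
  nlinarith [Real.sin_sq_add_cos_sq β]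

lemma mem_image_iff {M N : Matrix (Fin 2) (Fin 2) ℝ} (h1 : M * N = 1) (h2 : N * M = 1)
    (V : Set (Fin 2 → ℝ)) (x : Fin 2 → ℝ) : x ∈ M.mulVec '' V ↔ N.mulVec x ∈ V := by
  constructor
  · rintro ⟨v, hv, rfl⟩
    rwa [Matrix.mulVec_mulVec, h2, Matrix.one_mulVec]
  · intro h
    exact ⟨N.mulVec x, h, by rw [Matrix.mulVec_mulVec, h1, Matrix.one_mulVec]⟩

lemma Rmat_pow (n l : ℕ) : Rmat n ^ l =
    !![Real.cos (l * (2 * Real.pi / n)), -Real.sin (l * (2 * Real.pi / n));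
       Real.sin (l * (2 * Real.pi / n)), Real.cos (l * (2 * Real.pi / n))] := by
  induction l with
  | zero => simp [Matrix.one_fin_two]
  | succ l ih =>
      rw [pow_succ, ih]
      have hc : ((l+1 : ℕ) : ℝ) * (2*Real.pi/n) = l * (2*Real.pi/n) + 2*Real.pi/n := by
        push_cast; ring
      rw [Rmat, Matrix.mul_fin_two, hc, Real.cos_add, Real.sin_add]
      congr 1 <;> ring

lemma transpose_fin_two' (a b c d : ℝ) :
    (!![a, b; c, d])ᵀ = !![a, c; b, d] := by
  ext i j
  fin_cases i <;> fin_cases j <;> rfl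

end St16

open St16 Real

set_option maxHeartbeats 2000000 in
/-- The set `V^{a,n}` tiles `ℝ²` under the action of
`𝒟^{-T}` for `𝒟 = {aᵏ Rₙˡ : k ∈ ℤ, l = 0, …, n/2 - 1}`: for almost every
`ξ ∈ ℝ²`, `∑_{k ∈ ℤ} ∑_{l=0}^{n/2-1} 𝟙_{(aᵏ Rₙˡ)^{-T} V}(ξ) = 1`. -/
theorem statement_16 (a n : ℕ) (ha : 2 ≤ a) (hn : Even n) (hn2 : 2 < n) :
    ∀ᵐ (ξ : Fin 2 → ℝ) ∂volume,
      (∑' k : ℤ, ∑ l ∈ Finset.range (n / 2),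
        (((((a : ℝ) ^ k • Rmat n ^ l)⁻¹)ᵀ).mulVec '' Van a n).indicator
          (fun _ => (1 : ℝ≥0∞)) ξ) = 1 := by
  have hπ := Real.pi_pos
  obtain ⟨m', hm'⟩ := hn
  set m : ℕ := n / 2 with hm_def
  have hnm : n = 2 * m := by omega
  have hm2 : 2 ≤ m := by omega
  set s : ℝ := 2 * Real.pi / n with hs_def
  have hn0 : (0:ℝ) < (n:ℝ) := by exact_mod_cast (by omega : 0 < n)
  have hs_pos : 0 < s := by positivity
  have hms : (m:ℝ) * s = Real.pi := by
    rw [hs_def]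
    have : (n:ℝ) = 2 * m := by exact_mod_cast hnm
    field_simp [this]
    linarith
  have hm2R : (2:ℝ) ≤ (m:ℝ) := by exact_mod_cast hm2
  have hs_le : s ≤ Real.pi/2 := by nlinarith [hs_pos, hms, hm2R]
  have h_t : Real.pi / n = s / 2 := by rw [hs_def]; ring
  have ha0 : (0:ℝ) < (a:ℝ) := by exact_mod_cast (by omega : 0 < a)
  have haR : (2:ℝ) ≤ (a:ℝ) := by exact_mod_cast ha
  -- the null set
  have hnull : ∀ᵐ ξ : Fin 2 → ℝ ∂volume, ∀ q : ℤ,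
      Real.sin (Real.pi/2 - s/2 + q * s) * ξ 0
        - Real.cos (Real.pi/2 - s/2 + q * s) * ξ 1 ≠ 0 := by
    rw [MeasureTheory.ae_all_iff]
    intro q
    have h0 := line_null (Real.pi/2 - s/2 + q * s)
    exact (MeasureTheory.measure_eq_zero_iff_ae_notMem.mp h0)
  filter_upwards [hnull] with ξ hξ
  -- polar coordinates
  set z : ℂ := ⟨ξ 0, ξ 1⟩ with hz_def
  have hz : z ≠ 0 := by
    intro h
    have h0 : ξ 0 = 0 := congrArg Complex.re h
    have h1 : ξ 1 = 0 := congrArg Complex.im h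
    exact hξ 0 (by rw [h0, h1]; ring)
  set r : ℝ := ‖z‖ with hr_def
  have hr : 0 < r := norm_pos_iff.mpr hz
  set θ : ℝ := Complex.arg z with hθ_def
  have hξ0 : ξ 0 = r * Real.cos θ := by
    rw [hθ_def, Complex.cos_arg hz, ← hr_def]
    field_simp
    rfl
  have hξ1 : ξ 1 = r * Real.sin θ := by
    rw [hθ_def, Complex.sin_arg, ← hr_def]
    field_simp
    rfl
  -- the angle avoids bad lines
  have key : ∀ q : ℤ, Real.sin (θ - (Real.pi/2 - s/2 + q * s)) ≠ 0 := by
    intro q h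
    apply hξ q
    have e : Real.sin (Real.pi/2 - s/2 + q*s) * ξ 0 - Real.cos (Real.pi/2 - s/2 + q*s) * ξ 1
        = -r * Real.sin (θ - (Real.pi/2 - s/2 + q*s)) := by
      rw [hξ0, hξ1, Real.sin_sub]; ring
    rw [e, h, mul_zero]
  set c : ℝ := (θ - (Real.pi/2 - s/2))/s with hc_def
  have hcs : c * s = θ - (Real.pi/2 - s/2) := div_mul_cancel₀ _ (ne_of_gt hs_pos)
  have hcZ : ∀ q : ℤ, c ≠ q := by
    intro q hq
    apply key q
    have e : θ - (Real.pi/2 - s/2 + q*s) = (c - q) * s := by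
      rw [sub_mul, hcs]; ring
    rw [e, hq, sub_self, zero_mul, Real.sin_zero]
  set p : ℤ := ⌊c⌋ with hp_def
  have hp1 : (p:ℝ) < c := lt_of_le_of_ne (Int.floor_le c) (Ne.symm (hcZ p))
  have hp2 : c < p + 1 := Int.lt_floor_add_one c
  set x : ℝ := θ - p * s with hx_def
  have hxe : x = (Real.pi/2 - s/2) + (c - p) * s := by
    rw [hx_def, sub_mul, hcs]; ring
  have hx : x ∈ Set.Ioo (Real.pi/2 - s/2) (Real.pi/2 + s/2) := by
    constructor
    · have : 0 < (c - p) * s := mul_pos (by linarith) hs_pos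
      linarith [hxe]
    · have : (c - p) * s < 1 * s := by
        apply mul_lt_mul_of_pos_right (by linarith) hs_pos
      rw [one_mul] at this
      linarith [hxe]
  -- the distinguished index
  have hm0 : (0:ℤ) < (m:ℤ) := by exact_mod_cast (by omega : 0 < m)
  set l₀ : ℕ := (p % (m:ℤ)).toNat with hl₀_def
  have hl₀m : (l₀:ℤ) = p % (m:ℤ) := Int.toNat_of_nonneg (Int.emod_nonneg p (by omega))
  have hl₀lt : l₀ < m := by
    have h := Int.emod_lt_of_pos p hm0
    omega
  -- decomposition of angles
  have hdec : ∀ l : ℕ, l < m →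
      |Real.cos (θ - l * s)| = |Real.cos (x + (((p - l) % (m:ℤ) : ℤ) : ℝ) * s)| := by
    intro l hl
    have e1 : ((p - l : ℤ) : ℝ) = (m:ℝ) * (((p - l) / (m:ℤ) : ℤ) : ℝ)
        + (((p - l) % (m:ℤ) : ℤ) : ℝ) := by
      exact_mod_cast (Int.mul_ediv_add_emod (p - l) (m:ℤ)).symm
    have e2 : θ - l * s = (x + (((p - l) % (m:ℤ) : ℤ) : ℝ) * s)
        + (((p - l) / (m:ℤ) : ℤ) : ℝ) * Real.pi := by
      rw [hx_def, ← hms]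
      push_cast at e1
      linear_combination s * e1
    rw [e2, abs_cos_add_int_mul_pi]
  have hmod_l₀ : ((p - l₀) % (m:ℤ)) = 0 := by
    have e : p - (l₀:ℤ) = (m:ℤ) * (p / (m:ℤ)) := by
      have := Int.mul_ediv_add_emod p (m:ℤ)
      omega
    rw [e, Int.mul_emod_right]
  have hcos_l₀ : |Real.cos (θ - l₀ * s)| < Real.sin (s/2) := by
    rw [hdec l₀ hl₀lt, hmod_l₀]
    push_cast
    rw [zero_mul, add_zero]
    exact abs_cos_lt hs_pos hs_le hx
  have hcos_ne : ∀ l : ℕ, l < m → l ≠ l₀ → Real.sin (s/2) < |Real.cos (θ - l * s)| := by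
    intro l hl hne
    set d : ℤ := (p - l) % (m:ℤ) with hd_def
    have hd0 : 0 ≤ d := Int.emod_nonneg _ (by omega)
    have hdm : d < m := Int.emod_lt_of_pos _ hm0
    have hd1 : 1 ≤ d := by
      rcases eq_or_lt_of_le hd0 with h0 | h0
      · exfalso
        apply hne
        have hz0 : (p - (l:ℤ)) % (m:ℤ) = 0 := by rw [← hd_def]; omega
        have h1 : p % (m:ℤ) = (l:ℤ) % (m:ℤ) :=
          Int.emod_eq_emod_iff_emod_sub_eq_zero.mpr hz0
        have h2 : (l:ℤ) % (m:ℤ) = (l:ℤ) :=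
          Int.emod_eq_of_lt (by positivity) (by exact_mod_cast hl)
        have : (l:ℤ) = (l₀:ℤ) := by rw [hl₀m, h1, h2]
        exact_mod_cast this
      · omega
    rw [hdec l hl]
    apply sin_lt_abs_cos hs_pos hs_le
    have hds1 : s ≤ (d:ℝ) * s := by
      have : (1:ℝ) ≤ (d:ℝ) := by exact_mod_cast hd1
      nlinarith
    have hds2 : (d:ℝ) * s ≤ ((m:ℝ) - 1) * s := by
      have : (d:ℝ) ≤ (m:ℝ) - 1 := by
        have : (d:ℝ) + 1 ≤ (m:ℝ) := by exact_mod_cast hdm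
        linarith
      nlinarith
    constructor
    · linarith [hx.1]
    · have : (m:ℝ) * s = Real.pi := hms
      linarith [hx.2]
  have hsin1 : Real.sin (s/2) < 1 := by
    have h1 := Real.sin_lt (by positivity : 0 < s/2)
    have h2 : Real.pi < 4 := by linarith [Real.pi_lt_d2]
    linarith
  have hsin_l₀ : Real.sin (θ - l₀ * s) ≠ 0 := by
    intro h
    have hp' := Real.sin_sq_add_cos_sq (θ - l₀*(s:ℝ))
    rw [h] at hp'
    have hsq : Real.cos (θ - l₀*(s:ℝ))^2 = 1 := by
      have h00 : (0:ℝ)^2 = 0 := by norm_num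
      linarith [h00]
    have habs1 : |Real.cos (θ - l₀*(s:ℝ))| = 1 := by
      have h2 : |Real.cos (θ - l₀*(s:ℝ))|^2 = 1 := by rw [sq_abs]; exact hsq
      have h3 : 0 ≤ |Real.cos (θ - l₀*(s:ℝ))| := abs_nonneg _
      nlinarith
    rw [habs1] at hcos_l₀
    linarith
  set t : ℝ := r * |Real.sin (θ - l₀ * s)| with ht_def
  have ht : 0 < t := mul_pos hr (abs_pos.mpr hsin_l₀)
  obtain ⟨k₀, hk₀, hk₀u⟩ := radial haR ht
  -- membership characterization
  have hmem : ∀ (k : ℤ) (l : ℕ),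
      (ξ ∈ ((((a:ℝ)^k • Rmat n ^ l)⁻¹)ᵀ).mulVec '' Van a n) ↔
      ((a:ℝ)^k * (r * |Real.sin (θ - l * s)|) ∈ Set.Ioc 1 (a:ℝ) ∧
       |Real.cos (θ - l * s)| ≤ Real.sin (s/2)) := by
    intro k l
    have hak : (0:ℝ) < (a:ℝ)^k := zpow_pos ha0 k
    set B : Matrix (Fin 2) (Fin 2) ℝ := (a:ℝ)^k • Rmat n ^ l with hB
    have hdetR : (Rmat n).det = 1 := by
      rw [Rmat, Matrix.det_fin_two_of]
      nlinarith [Real.sin_sq_add_cos_sq (2*Real.pi/n)]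
    have hdet : IsUnit B.det := by
      rw [hB, Matrix.det_smul, Matrix.det_pow, hdetR, one_pow, mul_one]
      exact IsUnit.mk0 _ (by positivity)
    have h1 : (B⁻¹)ᵀ * Bᵀ = 1 := by
      rw [← Matrix.transpose_mul, Matrix.mul_nonsing_inv _ hdet, Matrix.transpose_one]
    have h2 : Bᵀ * (B⁻¹)ᵀ = 1 := by
      rw [← Matrix.transpose_mul, Matrix.nonsing_inv_mul _ hdet, Matrix.transpose_one]
    rw [mem_image_iff h1 h2]
    have hls : (l:ℝ) * (2*Real.pi/n) = l * s := by rw [hs_def]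
    have hw : Bᵀ.mulVec ξ = fun i =>
        (a:ℝ)^k * (![r * Real.cos (θ - l*s), r * Real.sin (θ - l*s)] i) := by
      rw [hB, Matrix.transpose_smul, Matrix.smul_mulVec, Rmat_pow,
        transpose_fin_two']
      ext i
      fin_cases i <;>
        · simp [Matrix.mulVec, dotProduct, Fin.sum_univ_two, Matrix.transpose_apply,
            hξ0, hξ1, Real.cos_sub, Real.sin_sub, hls, smul_eq_mul]
          try ring
          try tauto
    rw [hw]
    simp only [Van, Set.mem_setOf_eq, Matrix.cons_val_one, Matrix.head_cons,
      Matrix.cons_val_zero]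
    rw [h_t]
    have e1 : |(a:ℝ)^k * (r * Real.sin (θ - l*s))| = (a:ℝ)^k * (r * |Real.sin (θ - l*s)|) := by
      rw [abs_mul, abs_mul, abs_of_pos hak, abs_of_pos hr]
    have e0 : |(a:ℝ)^k * (r * Real.cos (θ - l*s))| = (a:ℝ)^k * (r * |Real.cos (θ - l*s)|) := by
      rw [abs_mul, abs_mul, abs_of_pos hak, abs_of_pos hr]
    rw [e1, e0]
    have hcone : ((a:ℝ)^k * (r * |Real.cos (θ - l*s)|)
        ≤ Real.tan (s/2) * ((a:ℝ)^k * (r * |Real.sin (θ - l*s)|)))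
        ↔ |Real.cos (θ - l*s)| ≤ Real.sin (s/2) := by
      rw [← cone_iff (by positivity : 0 < s/2) (by linarith : s/2 < Real.pi/2)]
      constructor
      · intro h
        have h' := h
        rw [show Real.tan (s/2) * ((a:ℝ)^k * (r * |Real.sin (θ - l*s)|))
            = (a:ℝ)^k * (r * (Real.tan (s/2) * |Real.sin (θ - l*s)|)) by ring] at h'
        have := le_of_mul_le_mul_left h' hak
        exact le_of_mul_le_mul_left this hr
      · intro h
        have h' : r * |Real.cos (θ - l*s)| ≤ r * (Real.tan (s/2) * |Real.sin (θ - l*s)|) :=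
          mul_le_mul_of_nonneg_left h hr.le
        have h'' := mul_le_mul_of_nonneg_left h' hak.le
        calc (a:ℝ)^k * (r * |Real.cos (θ - l*s)|)
            ≤ (a:ℝ)^k * (r * (Real.tan (s/2) * |Real.sin (θ - l*s)|)) := h''
          _ = Real.tan (s/2) * ((a:ℝ)^k * (r * |Real.sin (θ - l*s)|)) := by ring
    rw [hcone]
  -- indicator values
  have hind : ∀ (k : ℤ) (l : ℕ), l < m →
      (((((a:ℝ)^k • Rmat n ^ l)⁻¹)ᵀ).mulVec '' Van a n).indicator
        (fun _ => (1:ℝ≥0∞)) ξ = if k = k₀ ∧ l = l₀ then 1 else 0 := by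
    intro k l hlm
    by_cases hx' : ξ ∈ ((((a:ℝ)^k • Rmat n ^ l)⁻¹)ᵀ).mulVec '' Van a n
    · rw [Set.indicator_of_mem hx']
      obtain ⟨hA, hBc⟩ := (hmem k l).mp hx'
      have hl_eq : l = l₀ := by
        by_contra hne
        exact absurd hBc (not_le.mpr (hcos_ne l hlm hne))
      subst hl_eq
      have hk_eq : k = k₀ := hk₀u k hA
      simp [hk_eq]
    · rw [Set.indicator_of_notMem hx']
      by_cases h : k = k₀ ∧ l = l₀
      · exfalso
        apply hx'
        obtain ⟨hk, hl⟩ := h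
        apply (hmem k l).mpr
        rw [hk, hl]
        exact ⟨hk₀, hcos_l₀.le⟩
      · rw [if_neg h]
  -- conclude
  have hsum : ∀ k : ℤ, ∑ l ∈ Finset.range (n / 2),
      (((((a:ℝ)^k • Rmat n ^ l)⁻¹)ᵀ).mulVec '' Van a n).indicator (fun _ => (1:ℝ≥0∞)) ξ
      = if k = k₀ then 1 else 0 := by
    intro k
    rw [Finset.sum_congr rfl (fun l hl => hind k l (by
      rw [Finset.mem_range] at hl; omega))]
    by_cases hk : k = k₀
    · subst hk
      simp only [eq_self_iff_true, true_and, if_true]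
      have hl₀n : l₀ ∈ Finset.range (n/2) := Finset.mem_range.mpr (by omega)
      rw [Finset.sum_ite_eq' (Finset.range (n/2)) l₀ (fun _ => (1:ℝ≥0∞)), if_pos hl₀n]
    · simp [hk]
  calc (∑' k : ℤ, ∑ l ∈ Finset.range (n / 2),
        (((((a : ℝ) ^ k • Rmat n ^ l)⁻¹)ᵀ).mulVec '' Van a n).indicator
          (fun _ => (1 : ℝ≥0∞)) ξ)
      = ∑' k : ℤ, (if k = k₀ then (1:ℝ≥0∞) else 0) := tsum_congr hsum
    _ = 1 := tsum_ite_eq k₀ 1
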